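/- Fix r > 0 and the Dirichlet case z_n = n. Suppose W, W̃ ∈ L²(0,π) with mean zero and ‖W‖, ‖W̃‖ ≤ C_r; let Δ(ρ²) = sin(πρ)/ρ + ρ^{-2}∫₀^π cos(tρ)W(t)dt and similarly Δ̃; let (ρ_n), (ρ̃_n) satisfy ρ_n² zeros of Δ, ρ̃_n² zeros of Δ̃, with Σ n²|ρ_n − n|² ≤ r², Σ n²|ρ̃_n − n|² ≤ r², and ‖Ŵ‖_{L²} ≤ C_r Ξ where Ξ = (Σ n²|ρ_n − ρ̃_n|²)^{1/2}. Define f(ρ) = Δ(ρ²)/(ρ − ρ_n) and g(ρ) = Δ̂(ρ²) + (ρ_n − ρ̃_n) f(ρ). Then g(ρ̃_n) = 0, and there is a constant C'_r depending only on r such that |g(ρ)| ≤ C'_r Ξ / n² for all ρ with |ρ − ρ̃_n| ≤ 2r and all sufficiently large n; consequently |d̂_n| := |lim_{ρ→n} g(ρ)/(ρ − ρ̃_n)| ≤ C''_r Ξ / n². -/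

import Mathlib

open MeasureTheory Filter Topology Metric Set intervalIntegral

private lemma norm_exp_le (z : ℂ) : ‖Complex.exp z‖ ≤ Real.exp |z.re| := by
  rw [Complex.norm_exp]
  exact Real.exp_le_exp.2 (le_abs_self _)

private lemma norm_cos_le'' (z : ℂ) : ‖Complex.cos z‖ ≤ Real.exp |z.im| := by
  rw [Complex.cos]
  calc ‖(Complex.exp (z*Complex.I) + Complex.exp (-z*Complex.I))/2‖
      ≤ (‖Complex.exp (z*Complex.I)‖ + ‖Complex.exp (-z*Complex.I)‖)/2 := by
        rw [norm_div]
        have h2 : ‖(2:ℂ)‖ = 2 := by norm_num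
        rw [h2]
        gcongr
        exact norm_add_le _ _
    _ ≤ (Real.exp |z.im| + Real.exp |z.im|)/2 := by
        gcongr
        · calc ‖Complex.exp (z*Complex.I)‖ ≤ Real.exp |(z*Complex.I).re| := norm_exp_le _
            _ = Real.exp |z.im| := by simp [Complex.mul_I_re, abs_neg]
        · calc ‖Complex.exp (-z*Complex.I)‖ ≤ Real.exp |(-z*Complex.I).re| := norm_exp_le _
            _ = Real.exp |z.im| := by simp [Complex.mul_I_re, abs_neg]
    _ = Real.exp |z.im| := by ring

private lemma norm_sin_le'' (z : ℂ) : ‖Complex.sin z‖ ≤ Real.exp |z.im| := by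
  rw [Complex.sin]
  calc ‖(Complex.exp (-z*Complex.I) - Complex.exp (z*Complex.I))*Complex.I/2‖
      = ‖Complex.exp (-z*Complex.I) - Complex.exp (z*Complex.I)‖/2 := by
        rw [norm_div, norm_mul]; simp
    _ ≤ (‖Complex.exp (-z*Complex.I)‖ + ‖Complex.exp (z*Complex.I)‖)/2 := by
        gcongr; exact norm_sub_le _ _
    _ ≤ (Real.exp |z.im| + Real.exp |z.im|)/2 := by
        gcongr
        · calc ‖Complex.exp (-z*Complex.I)‖ ≤ Real.exp |(-z*Complex.I).re| := norm_exp_le _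
            _ = Real.exp |z.im| := by simp [Complex.mul_I_re, abs_neg]
        · calc ‖Complex.exp (z*Complex.I)‖ ≤ Real.exp |(z*Complex.I).re| := norm_exp_le _
            _ = Real.exp |z.im| := by simp [Complex.mul_I_re, abs_neg]
    _ = Real.exp |z.im| := by ring

private lemma aux_finite : IsFiniteMeasure (volume.restrict (Set.Ioc (0:ℝ) Real.pi)) := by
  constructor
  rw [Measure.restrict_apply_univ]
  exact measure_Ioc_lt_top

private lemma aux_l1_le_l2 (W : ℝ → ℂ)
    (hW : MemLp W 2 (volume.restrict (Set.Ioc (0:ℝ) Real.pi))) :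
    ∫ t in Set.Ioc (0:ℝ) Real.pi, ‖W t‖ ≤
      Real.sqrt Real.pi * Real.sqrt (∫ t in Set.Ioc (0:ℝ) Real.pi, ‖W t‖^2) := by
  haveI := aux_finite
  have hpq : (2:ℝ).HolderConjugate 2 := Real.HolderConjugate.two_two
  have hf2 : MemLp (fun t => ‖W t‖) (ENNReal.ofReal 2)
      (volume.restrict (Set.Ioc (0:ℝ) Real.pi)) := by
    rw [show ENNReal.ofReal 2 = 2 by norm_num]
    exact hW.norm
  have hg2 : MemLp (fun _ : ℝ => (1:ℝ)) (ENNReal.ofReal 2)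
      (volume.restrict (Set.Ioc (0:ℝ) Real.pi)) := memLp_const 1
  have H := integral_mul_le_Lp_mul_Lq_of_nonneg hpq
    (Eventually.of_forall fun t => norm_nonneg (W t))
    (Eventually.of_forall fun _ => zero_le_one) hf2 hg2
  simp only [mul_one, Real.one_rpow] at H
  have h1 : ∫ (_ : ℝ) in Set.Ioc (0:ℝ) Real.pi, (1:ℝ) = Real.pi := by
    simp [Real.volume_Ioc, ENNReal.toReal_ofReal Real.pi_pos.le, Real.pi_pos.le]
  have h2 : (fun t => ‖W t‖ ^ (2:ℝ)) = fun t => ‖W t‖ ^ 2 := by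
    funext t
    rw [show (2:ℝ) = ((2:ℕ):ℝ) by norm_num, Real.rpow_natCast]
  rw [h1, h2] at H
  calc ∫ t in Set.Ioc (0:ℝ) Real.pi, ‖W t‖
      ≤ (∫ t in Set.Ioc (0:ℝ) Real.pi, ‖W t‖^2) ^ (1/2:ℝ) * Real.pi ^ (1/2:ℝ) := H
    _ = Real.sqrt Real.pi * Real.sqrt (∫ t in Set.Ioc (0:ℝ) Real.pi, ‖W t‖^2) := by
        rw [← Real.sqrt_eq_rpow, ← Real.sqrt_eq_rpow, mul_comm]

private lemma aux_int_bound (W : ℝ → ℂ)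
    (hW : MemLp W 2 (volume.restrict (Set.Ioc (0:ℝ) Real.pi)))
    (f : ℝ → ℂ) (hf : Continuous f) {B : ℝ} (hB0 : 0 ≤ B)
    (hB : ∀ t ∈ Set.Ioc (0:ℝ) Real.pi, ‖f t‖ ≤ B) :
    ‖∫ t in (0:ℝ)..Real.pi, f t * W t‖ ≤
      B * (Real.sqrt Real.pi * Real.sqrt (∫ t in (0:ℝ)..Real.pi, ‖W t‖^2)) := by
  haveI := aux_finite
  have hWi : Integrable W (volume.restrict (Set.Ioc (0:ℝ) Real.pi)) :=
    hW.integrable (by norm_num)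
  have hae : ∀ᵐ t ∂(volume.restrict (Set.Ioc (0:ℝ) Real.pi)), ‖f t‖ ≤ B :=
    (ae_restrict_iff' measurableSet_Ioc).2 (Eventually.of_forall hB)
  have hfWi : Integrable (fun t => f t * W t)
      (volume.restrict (Set.Ioc (0:ℝ) Real.pi)) :=
    hWi.bdd_mul hf.aestronglyMeasurable hae
  rw [intervalIntegral.integral_of_le Real.pi_pos.le,
    intervalIntegral.integral_of_le Real.pi_pos.le]
  calc ‖∫ t in Set.Ioc (0:ℝ) Real.pi, f t * W t‖
      ≤ ∫ t in Set.Ioc (0:ℝ) Real.pi, ‖f t * W t‖ := norm_integral_le_integral_norm _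
    _ ≤ ∫ t in Set.Ioc (0:ℝ) Real.pi, B * ‖W t‖ := by
        refine integral_mono_ae hfWi.norm (hWi.norm.const_mul B) ?_
        filter_upwards [hae] with t ht
        rw [norm_mul]
        exact mul_le_mul_of_nonneg_right ht (norm_nonneg _)
    _ = B * ∫ t in Set.Ioc (0:ℝ) Real.pi, ‖W t‖ := MeasureTheory.integral_const_mul _ _
    _ ≤ B * (Real.sqrt Real.pi * Real.sqrt (∫ t in Set.Ioc (0:ℝ) Real.pi, ‖W t‖^2)) :=
        mul_le_mul_of_nonneg_left (aux_l1_le_l2 W hW) hB0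


private lemma aux_cos_bound {t : ℝ} (h0 : 0 ≤ t) (hπ : t ≤ Real.pi) {z : ℂ} {R : ℝ}
    (hz : ‖z‖ ≤ R) : ‖Complex.cos (t*z)‖ ≤ Real.exp (Real.pi * R) := by
  refine (norm_cos_le'' _).trans (Real.exp_le_exp.2 ?_)
  have him : |((t:ℂ)*z).im| = t * |z.im| := by
    simp [Complex.mul_im, abs_mul, abs_of_nonneg h0]
  rw [him]
  have : |z.im| ≤ R := (Complex.abs_im_le_norm z).trans hz
  have hR : 0 ≤ R := (norm_nonneg z).trans hz
  nlinarith [Real.pi_pos]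

private lemma aux_sin_bound {t : ℝ} (h0 : 0 ≤ t) (hπ : t ≤ Real.pi) {z : ℂ} {R : ℝ}
    (hz : ‖z‖ ≤ R) : ‖Complex.sin (t*z)‖ ≤ Real.exp (Real.pi * R) := by
  refine (norm_sin_le'' _).trans (Real.exp_le_exp.2 ?_)
  have him : |((t:ℂ)*z).im| = t * |z.im| := by
    simp [Complex.mul_im, abs_mul, abs_of_nonneg h0]
  rw [him]
  have : |z.im| ≤ R := (Complex.abs_im_le_norm z).trans hz
  have hR : 0 ≤ R := (norm_nonneg z).trans hz
  nlinarith [Real.pi_pos]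

private lemma aux_II (W : ℝ → ℂ)
    (hWi : Integrable W (volume.restrict (Set.Ioc (0:ℝ) Real.pi))) (z : ℂ) :
    IntervalIntegrable (fun t => Complex.cos (t*z) * W t) volume 0 Real.pi := by
  rw [intervalIntegrable_iff_integrableOn_Ioc_of_le Real.pi_pos.le]
  refine hWi.bdd_mul (c := Real.exp (Real.pi * ‖z‖)) (Continuous.aestronglyMeasurable (by continuity)) ?_
  refine (ae_restrict_iff' measurableSet_Ioc).2 (Eventually.of_forall fun t ht => ?_)
  exact aux_cos_bound ht.1.le ht.2 le_rfl

private lemma aux_hasDerivAt (W : ℝ → ℂ)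
    (hWi : Integrable W (volume.restrict (Set.Ioc (0:ℝ) Real.pi))) (z : ℂ) :
    HasDerivAt (fun z : ℂ => ∫ t in (0:ℝ)..Real.pi, Complex.cos (t*z) * W t)
      (∫ t in (0:ℝ)..Real.pi, -Complex.sin (t*z) * t * W t) z := by
  have huIoc : Set.uIoc (0:ℝ) Real.pi = Set.Ioc 0 Real.pi := uIoc_of_le Real.pi_pos.le
  have hWm : AEStronglyMeasurable W (volume.restrict (Set.uIoc (0:ℝ) Real.pi)) := by
    rw [huIoc]; exact hWi.aestronglyMeasurable
  have h := intervalIntegral.hasDerivAt_integral_of_dominated_loc_of_deriv_le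
    (F := fun (x : ℂ) (t : ℝ) => Complex.cos (t*x) * W t)
    (F' := fun (x : ℂ) (t : ℝ) => -Complex.sin (t*x) * t * W t)
    (bound := fun t => Real.pi * Real.exp (Real.pi * (‖z‖+1)) * ‖W t‖)
    (μ := volume) (a := 0) (b := Real.pi) (x₀ := z) (s := ball z 1) (ball_mem_nhds z one_pos)
    (Eventually.of_forall fun x =>
      ((Continuous.aestronglyMeasurable (by continuity)).mul hWm))
    (aux_II W hWi z)
    ((Continuous.aestronglyMeasurable (by continuity)).mul hWm)
    ?_ ?_ ?_
  · exact h.2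
  · refine Eventually.of_forall fun t ht x hx => ?_
    rw [huIoc] at ht
    have hxn : ‖x‖ ≤ ‖z‖ + 1 := by
      have := mem_ball_iff_norm.1 hx
      calc ‖x‖ ≤ ‖z‖ + ‖x - z‖ := by
            simpa [add_comm] using norm_add_le (x - z) z
        _ ≤ ‖z‖ + 1 := by linarith
    have h1 : ‖Complex.sin (t*x)‖ ≤ Real.exp (Real.pi * (‖z‖+1)) :=
      aux_sin_bound ht.1.le ht.2 hxn
    calc ‖-Complex.sin (t*x) * t * W t‖ = ‖Complex.sin (t*x)‖ * |t| * ‖W t‖ := by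
          rw [norm_mul, norm_mul, norm_neg, Complex.norm_real, Real.norm_eq_abs]
      _ ≤ Real.exp (Real.pi * (‖z‖+1)) * Real.pi * ‖W t‖ := by
          have habs : |t| ≤ Real.pi := by rw [abs_of_nonneg ht.1.le]; exact ht.2
          have hm := mul_le_mul h1 habs (abs_nonneg t) (Real.exp_nonneg _)
          exact mul_le_mul_of_nonneg_right hm (norm_nonneg _)
      _ = Real.pi * Real.exp (Real.pi * (‖z‖+1)) * ‖W t‖ := by ring_nf
  · rw [intervalIntegrable_iff_integrableOn_Ioc_of_le Real.pi_pos.le]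
    exact (hWi.norm.const_mul _)
  · refine Eventually.of_forall fun t ht x hx => ?_
    have h1 : HasDerivAt (fun y : ℂ => (t:ℂ)*y) ((t:ℂ)) x := by
      simpa using (hasDerivAt_id x).const_mul (t:ℂ)
    have h2 : HasDerivAt (fun y : ℂ => Complex.cos ((t:ℂ)*y))
        (-Complex.sin ((t:ℂ)*x) * (t:ℂ)) x :=
      (Complex.hasDerivAt_cos ((t:ℂ)*x)).comp x h1
    simpa using h2.mul_const (W t)

private lemma aux_sq_le {a b : ℝ} (ha : 0 ≤ a) (hb : 0 ≤ b) (h : a^2 ≤ b^2) : a ≤ b := by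
  nlinarith

set_option maxHeartbeats 1000000 in
theorem stmt18 (r Cr : ℝ) (hr : 0 < r) (hCr : 0 < Cr)
    (W W' : ℝ → ℂ) (ρ ρ' : ℕ → ℂ) (Δ Δ' : ℂ → ℂ) (Ξ : ℝ)
    (hW : MemLp W 2 (volume.restrict (Set.Ioc (0:ℝ) Real.pi)))
    (hW' : MemLp W' 2 (volume.restrict (Set.Ioc (0:ℝ) Real.pi)))
    (hWmean : ∫ t in (0:ℝ)..Real.pi, W t = 0)
    (hW'mean : ∫ t in (0:ℝ)..Real.pi, W' t = 0)
    (hWnorm : Real.sqrt (∫ t in (0:ℝ)..Real.pi, ‖W t‖ ^ 2) ≤ Cr)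
    (hW'norm : Real.sqrt (∫ t in (0:ℝ)..Real.pi, ‖W' t‖ ^ 2) ≤ Cr)
    (hΔ : ∀ z : ℂ, Δ z = Complex.sin (Real.pi * z) / z +
      (∫ t in (0:ℝ)..Real.pi, Complex.cos (t * z) * W t) / z ^ 2)
    (hΔ' : ∀ z : ℂ, Δ' z = Complex.sin (Real.pi * z) / z +
      (∫ t in (0:ℝ)..Real.pi, Complex.cos (t * z) * W' t) / z ^ 2)
    (hzero : ∀ n : ℕ, 1 ≤ n → Δ (ρ n) = 0)
    (hzero' : ∀ n : ℕ, 1 ≤ n → Δ' (ρ' n) = 0)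
    (hsum : Summable fun n : ℕ => (n : ℝ) ^ 2 * ‖ρ n - (n : ℂ)‖ ^ 2)
    (hsum' : Summable fun n : ℕ => (n : ℝ) ^ 2 * ‖ρ' n - (n : ℂ)‖ ^ 2)
    (hbd : ∑' n : ℕ, (n : ℝ) ^ 2 * ‖ρ n - (n : ℂ)‖ ^ 2 ≤ r ^ 2)
    (hbd' : ∑' n : ℕ, (n : ℝ) ^ 2 * ‖ρ' n - (n : ℂ)‖ ^ 2 ≤ r ^ 2)
    (hΞ : Ξ = Real.sqrt (∑' n : ℕ, (n : ℝ) ^ 2 * ‖ρ n - ρ' n‖ ^ 2))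
    (hWdiff : Real.sqrt (∫ t in (0:ℝ)..Real.pi, ‖W t - W' t‖ ^ 2) ≤ Cr * Ξ) :
    (∀ n : ℕ, 1 ≤ n →
      (Δ (ρ' n) - Δ' (ρ' n)) + (ρ n - ρ' n) * (Δ (ρ' n) / (ρ' n - ρ n)) = 0) ∧
    ∃ C' : ℝ, 0 < C' ∧ ∃ N : ℕ, ∀ n : ℕ, N ≤ n →
      (∀ z : ℂ, ‖z - ρ' n‖ ≤ 2 * r →
        ‖(Δ z - Δ' z) + (ρ n - ρ' n) * (Δ z / (z - ρ n))‖ ≤ C' * Ξ / n ^ 2) ∧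
      (∀ L : ℂ, Tendsto (fun z : ℂ =>
          ((Δ z - Δ' z) + (ρ n - ρ' n) * (Δ z / (z - ρ n))) / (z - ρ' n))
          (𝓝[≠] (n : ℂ)) (𝓝 L) → ‖L‖ ≤ C' * Ξ / n ^ 2) := by
  haveI := aux_finite
  have hπpos := Real.pi_pos
  have hWi : Integrable W (volume.restrict (Set.Ioc (0:ℝ) Real.pi)) :=
    hW.integrable (by norm_num)
  have hWi' : Integrable W' (volume.restrict (Set.Ioc (0:ℝ) Real.pi)) :=
    hW'.integrable (by norm_num)
  -- difference formula
  have hΔhat : ∀ z : ℂ, Δ z - Δ' z =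
      (∫ t in (0:ℝ)..Real.pi, Complex.cos (t*z) * (W t - W' t)) / z^2 := by
    intro z
    rw [hΔ z, hΔ' z]
    have he : (∫ t in (0:ℝ)..Real.pi, Complex.cos (t*z) * (W t - W' t))
        = (∫ t in (0:ℝ)..Real.pi, Complex.cos (t*z) * W t)
          - ∫ t in (0:ℝ)..Real.pi, Complex.cos (t*z) * W' t := by
      rw [← intervalIntegral.integral_sub (aux_II W hWi z) (aux_II W' hWi' z)]
      congr 1
      funext t
      ring
    rw [he]
    ring
  -- part 1
  have hpart1 : ∀ n : ℕ, 1 ≤ n →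
      (Δ (ρ' n) - Δ' (ρ' n)) + (ρ n - ρ' n) * (Δ (ρ' n) / (ρ' n - ρ n)) = 0 := by
    intro n hn
    rw [hzero' n hn, sub_zero]
    by_cases h : ρ' n = ρ n
    · rw [h, hzero n hn]; ring
    · have hne : ρ' n - ρ n ≠ 0 := sub_ne_zero.2 h
      field_simp
      ring
  refine ⟨hpart1, ?_⟩
  -- summability facts
  have htermle : ∀ n : ℕ, (n:ℝ)^2 * ‖ρ n - ρ' n‖^2 ≤
      2 * ((n:ℝ)^2 * ‖ρ n - (n:ℂ)‖^2) + 2 * ((n:ℝ)^2 * ‖ρ' n - (n:ℂ)‖^2) := by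
    intro n
    have h1 : ‖ρ n - ρ' n‖ ≤ ‖ρ n - (n:ℂ)‖ + ‖ρ' n - (n:ℂ)‖ := by
      have h := norm_sub_le (ρ n - (n:ℂ)) (ρ' n - (n:ℂ))
      rwa [sub_sub_sub_cancel_right] at h
    have h2 : (0:ℝ) ≤ (n:ℝ)^2 := by positivity
    have h3 : ‖ρ n - ρ' n‖^2 ≤ 2*‖ρ n - (n:ℂ)‖^2 + 2*‖ρ' n - (n:ℂ)‖^2 := by
      nlinarith [sq_nonneg (‖ρ n - (n:ℂ)‖ - ‖ρ' n - (n:ℂ)‖), norm_nonneg (ρ n - ρ' n),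
        norm_nonneg (ρ n - (n:ℂ)), norm_nonneg (ρ' n - (n:ℂ))]
    have h4 := mul_le_mul_of_nonneg_left h3 h2
    linarith [h4]
  have hsumd : Summable (fun n : ℕ => (n:ℝ)^2 * ‖ρ n - ρ' n‖^2) :=
    Summable.of_nonneg_of_le (fun n => by positivity) htermle
      ((hsum.mul_left 2).add (hsum'.mul_left 2))
  have hΞ0 : 0 ≤ Ξ := hΞ ▸ Real.sqrt_nonneg _
  have hΞsq : Ξ^2 = ∑' n : ℕ, (n:ℝ)^2 * ‖ρ n - ρ' n‖^2 := by
    rw [hΞ]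
    exact Real.sq_sqrt (tsum_nonneg (fun n => by positivity))
  have hterm : ∀ n : ℕ, (n:ℝ)^2 * ‖ρ n - ρ' n‖^2 ≤ Ξ^2 := by
    intro n
    rw [hΞsq]
    exact Summable.le_tsum hsumd n (fun j _ => by positivity)
  have hΞ2r : Ξ ≤ 2*r := by
    refine aux_sq_le hΞ0 (by linarith) ?_
    have h1 : ∑' n : ℕ, (n:ℝ)^2 * ‖ρ n - ρ' n‖^2 ≤
        ∑' n : ℕ, (2 * ((n:ℝ)^2 * ‖ρ n - (n:ℂ)‖^2) + 2 * ((n:ℝ)^2 * ‖ρ' n - (n:ℂ)‖^2)) :=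
      Summable.tsum_le_tsum htermle hsumd ((hsum.mul_left 2).add (hsum'.mul_left 2))
    have h2 : ∑' n : ℕ, (2 * ((n:ℝ)^2 * ‖ρ n - (n:ℂ)‖^2) + 2 * ((n:ℝ)^2 * ‖ρ' n - (n:ℂ)‖^2))
        = 2 * (∑' n : ℕ, (n:ℝ)^2 * ‖ρ n - (n:ℂ)‖^2) + 2 * ∑' n : ℕ, (n:ℝ)^2 * ‖ρ' n - (n:ℂ)‖^2 := by
      rw [Summable.tsum_add (hsum.mul_left 2) (hsum'.mul_left 2), tsum_mul_left, tsum_mul_left]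
    rw [hΞsq]
    nlinarith
  have hρb : ∀ n : ℕ, 1 ≤ n → ‖ρ n - (n:ℂ)‖ ≤ r / n := by
    intro n hn
    have hn0 : (0:ℝ) < n := by exact_mod_cast hn
    rw [le_div_iff₀ hn0]
    refine aux_sq_le (by positivity) hr.le ?_
    have h1 : (n:ℝ)^2 * ‖ρ n - (n:ℂ)‖^2 ≤ r^2 :=
      (Summable.le_tsum hsum n (fun j _ => by positivity)).trans hbd
    nlinarith
  have hρ'b : ∀ n : ℕ, 1 ≤ n → ‖ρ' n - (n:ℂ)‖ ≤ r / n := by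
    intro n hn
    have hn0 : (0:ℝ) < n := by exact_mod_cast hn
    rw [le_div_iff₀ hn0]
    refine aux_sq_le (by positivity) hr.le ?_
    have h1 : (n:ℝ)^2 * ‖ρ' n - (n:ℂ)‖^2 ≤ r^2 :=
      (Summable.le_tsum hsum' n (fun j _ => by positivity)).trans hbd'
    nlinarith
  have hδb : ∀ n : ℕ, 1 ≤ n → ‖ρ n - ρ' n‖ ≤ Ξ / n := by
    intro n hn
    have hn0 : (0:ℝ) < n := by exact_mod_cast hn
    rw [le_div_iff₀ hn0]
    refine aux_sq_le (by positivity) hΞ0 ?_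
    have h1 := hterm n
    nlinarith
  rcases eq_or_lt_of_le hΞ0 with hΞeq | hΞpos
  · -- degenerate case Ξ = 0
    refine ⟨1, one_pos, 1, fun n hn => ?_⟩
    have hρeq : ρ n = ρ' n := by
      have h := hterm n
      rw [← hΞeq] at h
      have hn0 : (0:ℝ) < n := by exact_mod_cast hn
      have hn2 : (0:ℝ) < (n:ℝ)^2 := by positivity
      have h3 : ‖ρ n - ρ' n‖^2 ≤ 0 := by
        by_contra hcon
        push_neg at hcon
        nlinarith
      have h4 : ‖ρ n - ρ' n‖^2 = 0 := le_antisymm h3 (by positivity)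
      have h2 : ‖ρ n - ρ' n‖ = 0 := pow_eq_zero_iff two_ne_zero |>.1 h4
      exact sub_eq_zero.1 (norm_eq_zero.1 h2)
    have hI0 : (∫ t in (0:ℝ)..Real.pi, ‖W t - W' t‖^2) = 0 := by
      have hle : Real.sqrt (∫ t in (0:ℝ)..Real.pi, ‖W t - W' t‖^2) ≤ 0 := by
        rw [← hΞeq, mul_zero] at hWdiff
        exact hWdiff
      have hge : (0:ℝ) ≤ ∫ t in (0:ℝ)..Real.pi, ‖W t - W' t‖^2 :=
        intervalIntegral.integral_nonneg Real.pi_pos.le (fun u _ => by positivity)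
      have hs0 : Real.sqrt (∫ t in (0:ℝ)..Real.pi, ‖W t - W' t‖^2) = 0 :=
        le_antisymm hle (Real.sqrt_nonneg _)
      have := Real.sqrt_eq_zero'.1 hs0
      linarith
    have hae : W =ᵐ[volume.restrict (Set.Ioc (0:ℝ) Real.pi)] W' := by
      have hint : Integrable (fun t => ‖W t - W' t‖^2)
          (volume.restrict (Set.Ioc (0:ℝ) Real.pi)) := by
        have h2 := (hW.sub hW').integrable_norm_rpow two_ne_zero ENNReal.ofNat_ne_top
        have he : (fun t => ‖(W - W') t‖ ^ ((2:ENNReal).toReal)) = fun t => ‖W t - W' t‖^2 := by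
          funext t
          rw [Pi.sub_apply, ENNReal.toReal_ofNat, (show (2:ℝ) = ((2:ℕ):ℝ) by norm_num),
            Real.rpow_natCast]
        rwa [he] at h2
      have h0 : ∫ t in Set.Ioc (0:ℝ) Real.pi, ‖W t - W' t‖^2 = 0 := by
        rw [← intervalIntegral.integral_of_le Real.pi_pos.le]
        exact hI0
      have hz := (integral_eq_zero_iff_of_nonneg (fun t => by positivity) hint).1 h0
      filter_upwards [hz] with t ht
      have h3 : ‖W t - W' t‖^2 = 0 := ht
      have h4 : ‖W t - W' t‖ = 0 := (pow_eq_zero_iff (two_ne_zero)).1 h3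
      exact sub_eq_zero.1 (norm_eq_zero.1 h4)
    have hΔeq : ∀ z : ℂ, Δ z - Δ' z = 0 := by
      intro z
      rw [hΔhat z]
      have hi0 : (∫ t in (0:ℝ)..Real.pi, Complex.cos (t*z) * (W t - W' t)) = 0 := by
        rw [intervalIntegral.integral_of_le Real.pi_pos.le]
        have hcong : (fun t => Complex.cos (t*z) * (W t - W' t))
            =ᵐ[volume.restrict (Set.Ioc (0:ℝ) Real.pi)] (fun _ => (0:ℂ)) := by
          filter_upwards [hae] with t ht
          rw [ht, sub_self, mul_zero]
        rw [integral_congr_ae hcong]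
        simp
      rw [hi0, zero_div]
    have hρδ0 : ρ n - ρ' n = 0 := sub_eq_zero.2 hρeq
    constructor
    · intro z hz
      rw [hΔeq z, hρδ0]
      simp [← hΞeq]
    · intro L hL
      have hfun : (fun z : ℂ => ((Δ z - Δ' z) + (ρ n - ρ' n) * (Δ z / (z - ρ n))) / (z - ρ' n))
          = fun _ : ℂ => (0:ℂ) := by
        funext z
        rw [hΔeq z, hρδ0]
        simp
      rw [hfun] at hL
      have hL0 : L = 0 := tendsto_nhds_unique hL tendsto_const_nhds
      simp [hL0, ← hΞeq]
  · -- main case Ξ > 0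
    have hK : (0:ℝ) < Real.exp (9 * Real.pi * r) := Real.exp_pos _
    set K := Real.exp (9 * Real.pi * r) with hKdef
    have hsπ : (0:ℝ) ≤ Real.sqrt Real.pi := Real.sqrt_nonneg _
    have hsπpos : (0:ℝ) < Real.sqrt Real.pi := Real.sqrt_pos.2 hπpos
    set C₁ := 4 * K * Real.sqrt Real.pi * Cr with hC₁def
    set C₂ := 2 * K + 4 * K * Real.sqrt Real.pi * Cr with hC₂def
    have hC₁0 : 0 ≤ C₁ := by positivity
    have hC₂pos : 0 < C₂ := by positivity
    set C₃ := C₂ / (4 * r) with hC₃def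
    have hC₃pos : 0 < C₃ := by positivity
    set S := C₁ + C₃ with hSdef
    have hSpos : 0 < S := by positivity
    set C' := S + S / (3*r) + 1 with hC'def
    have hC'pos : 0 < C' := by positivity
    refine ⟨C', hC'pos, max 2 ⌈20*r⌉₊, fun n hn => ?_⟩
    have hn2 : 2 ≤ n := le_trans (le_max_left _ _) hn
    have hn1 : 1 ≤ n := le_trans one_le_two hn2
    have hn0 : (0:ℝ) < n := by exact_mod_cast lt_of_lt_of_le one_pos hn1
    have hn1' : (1:ℝ) ≤ n := by exact_mod_cast hn1
    have hn20 : 20 * r ≤ (n:ℝ) := by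
      have h1 : (⌈20*r⌉₊ : ℝ) ≤ n := Nat.cast_le.2 (le_trans (le_max_right _ _) hn)
      exact le_trans (Nat.le_ceil _) h1
    have hρn : ‖ρ n - (n:ℂ)‖ ≤ r := (hρb n hn1).trans (div_le_self hr.le hn1')
    have hρ'n : ‖ρ' n - (n:ℂ)‖ ≤ r := (hρ'b n hn1).trans (div_le_self hr.le hn1')
    have hδn : ‖ρ n - ρ' n‖ ≤ Ξ / n := hδb n hn1
    have hδ2r : ‖ρ n - ρ' n‖ ≤ 2*r :=
      hδn.trans ((div_le_self hΞ0 hn1').trans hΞ2r)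
    -- geometry
    have hgeom : ∀ z : ℂ, ‖z - (n:ℂ)‖ ≤ 9*r →
        ((n:ℝ)/2 ≤ ‖z‖ ∧ z ≠ 0 ∧ |z.im| ≤ 9*r) := by
      intro z hz
      have hnz : ‖((n:ℂ))‖ = (n:ℝ) := by simp
      have h1 : (n:ℝ) - 9*r ≤ ‖z‖ := by
        have h2 := norm_sub_norm_le (n:ℂ) z
        rw [hnz, norm_sub_rev] at h2
        linarith
      have h2 : (n:ℝ)/2 ≤ ‖z‖ := by linarith
      refine ⟨h2, ?_, ?_⟩
      · intro h0
        rw [h0, norm_zero] at h2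
        linarith
      · have he : |z.im| = |(z - (n:ℂ)).im| := by
          simp [Complex.sub_im]
        rw [he]
        calc |(z - (n:ℂ)).im| ≤ ‖z - (n:ℂ)‖ := Complex.abs_im_le_norm _
          _ = ‖z - (n:ℂ)‖ := rfl
          _ ≤ 9*r := hz
    -- Δ bound
    have hΔb : ∀ z : ℂ, ‖z - (n:ℂ)‖ ≤ 9*r → ‖Δ z‖ ≤ C₂ / n := by
      intro z hz
      obtain ⟨hzl, hz0, him⟩ := hgeom z hz
      have hzpos : (0:ℝ) < ‖z‖ := lt_of_lt_of_le (by linarith) hzl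
      rw [hΔ z]
      have hsin : ‖Complex.sin ((Real.pi:ℂ) * z)‖ ≤ K := by
        refine (norm_sin_le'' _).trans (Real.exp_le_exp.2 ?_)
        have he : |((Real.pi:ℂ)*z).im| = Real.pi * |z.im| := by
          simp [Complex.mul_im, abs_mul, abs_of_nonneg Real.pi_pos.le]
        rw [he]
        calc Real.pi * |z.im| ≤ Real.pi * (9*r) :=
              mul_le_mul_of_nonneg_left him hπpos.le
          _ = 9 * Real.pi * r := by ring
      have hintb : ‖∫ t in (0:ℝ)..Real.pi, Complex.cos (t*z) * W t‖
          ≤ K * (Real.sqrt Real.pi * Cr) := by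
        have hcb : ∀ t ∈ Set.Ioc (0:ℝ) Real.pi, ‖Complex.cos (t*z)‖ ≤ K := by
          intro t ht
          refine (norm_cos_le'' _).trans (Real.exp_le_exp.2 ?_)
          have he : |((t:ℂ)*z).im| = t * |z.im| := by
            simp [Complex.mul_im, abs_mul, abs_of_nonneg ht.1.le]
          rw [he]
          calc t * |z.im| ≤ Real.pi * (9*r) :=
                mul_le_mul ht.2 him (abs_nonneg _) hπpos.le
            _ = 9 * Real.pi * r := by ring
        have hb := aux_int_bound W hW (fun t => Complex.cos (t*z)) (by continuity) hK.le hcb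
        refine hb.trans ?_
        gcongr
      calc ‖Complex.sin ((Real.pi:ℂ) * z) / z
            + (∫ t in (0:ℝ)..Real.pi, Complex.cos (t*z) * W t) / z^2‖
          ≤ ‖Complex.sin ((Real.pi:ℂ) * z)‖ / ‖z‖
            + ‖∫ t in (0:ℝ)..Real.pi, Complex.cos (t*z) * W t‖ / ‖z‖^2 := by
            refine (norm_add_le _ _).trans ?_
            rw [norm_div, norm_div, norm_pow]
        _ ≤ K / ((n:ℝ)/2) + (K * (Real.sqrt Real.pi * Cr)) / (((n:ℝ)/2)^2) := by
            have hn2pos : (0:ℝ) < (n:ℝ)/2 := by linarith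
            have t1 : ‖Complex.sin ((Real.pi:ℂ) * z)‖ / ‖z‖ ≤ K / ((n:ℝ)/2) :=
              div_le_div₀ hK.le hsin hn2pos hzl
            have t2 : ‖∫ t in (0:ℝ)..Real.pi, Complex.cos (t*z) * W t‖ / ‖z‖^2
                ≤ (K * (Real.sqrt Real.pi * Cr)) / (((n:ℝ)/2)^2) :=
              div_le_div₀ (by positivity) hintb (by positivity)
                (pow_le_pow_left₀ hn2pos.le hzl 2)
            linarith
        _ ≤ C₂ / n := by
            have e1 : K / ((n:ℝ)/2) = 2*K/n := by
              field_simp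
            have e2 : (K * (Real.sqrt Real.pi * Cr)) / (((n:ℝ)/2)^2)
                = 4*(K * (Real.sqrt Real.pi * Cr))/(n:ℝ)^2 := by
              field_simp
              ring
            rw [e1, e2]
            have e3 : 4*(K * (Real.sqrt Real.pi * Cr))/(n:ℝ)^2
                ≤ 4*(K * (Real.sqrt Real.pi * Cr))/(n:ℝ) := by
              gcongr
              exact le_self_pow₀ hn1' two_ne_zero
            have e4 : 2*K/(n:ℝ) + 4*(K * (Real.sqrt Real.pi * Cr))/(n:ℝ) = C₂/n := by
              rw [← add_div, hC₂def]
              ring_nf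
            linarith
    -- Δhat bound
    have hΔhatb : ∀ z : ℂ, ‖z - (n:ℂ)‖ ≤ 9*r → ‖Δ z - Δ' z‖ ≤ C₁ * Ξ / (n:ℝ)^2 := by
      intro z hz
      obtain ⟨hzl, hz0, him⟩ := hgeom z hz
      have hzpos : (0:ℝ) < ‖z‖ := lt_of_lt_of_le (by linarith) hzl
      rw [hΔhat z]
      have hintb : ‖∫ t in (0:ℝ)..Real.pi, Complex.cos (t*z) * (W t - W' t)‖
          ≤ K * (Real.sqrt Real.pi * (Cr * Ξ)) := by
        have hcb : ∀ t ∈ Set.Ioc (0:ℝ) Real.pi, ‖Complex.cos (t*z)‖ ≤ K := by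
          intro t ht
          refine (norm_cos_le'' _).trans (Real.exp_le_exp.2 ?_)
          have he : |((t:ℂ)*z).im| = t * |z.im| := by
            simp [Complex.mul_im, abs_mul, abs_of_nonneg ht.1.le]
          rw [he]
          calc t * |z.im| ≤ Real.pi * (9*r) :=
                mul_le_mul ht.2 him (abs_nonneg _) hπpos.le
            _ = 9 * Real.pi * r := by ring
        have hb := aux_int_bound (fun t => W t - W' t) (hW.sub hW')
          (fun t => Complex.cos (t*z)) (by continuity) hK.le hcb
        refine hb.trans ?_
        gcongr
      calc ‖(∫ t in (0:ℝ)..Real.pi, Complex.cos (t*z) * (W t - W' t)) / z^2‖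
          = ‖∫ t in (0:ℝ)..Real.pi, Complex.cos (t*z) * (W t - W' t)‖ / ‖z‖^2 := by
            rw [norm_div, norm_pow]
        _ ≤ (K * (Real.sqrt Real.pi * (Cr * Ξ))) / (((n:ℝ)/2)^2) := by
            have hn2pos : (0:ℝ) < (n:ℝ)/2 := by linarith
            exact div_le_div₀ (by positivity) hintb (by positivity)
              (pow_le_pow_left₀ hn2pos.le hzl 2)
        _ = C₁ * Ξ / (n:ℝ)^2 := by
            rw [hC₁def]
            field_simp
            ring
    -- differentiability
    have hΔdiff : ∀ z : ℂ, z ≠ 0 → DifferentiableAt ℂ Δ z := by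
      intro z hz
      have hfun : Δ = fun z : ℂ => Complex.sin ((Real.pi:ℂ) * z) / z +
          (∫ t in (0:ℝ)..Real.pi, Complex.cos (t * z) * W t) / z ^ 2 := funext hΔ
      rw [hfun]
      have h1 : DifferentiableAt ℂ (fun z : ℂ => Complex.sin ((Real.pi:ℂ) * z)) z :=
        (Complex.differentiable_sin.comp (differentiable_id.const_mul ((Real.pi:ℂ)))) z
      have h2 : DifferentiableAt ℂ
          (fun z : ℂ => ∫ t in (0:ℝ)..Real.pi, Complex.cos (t * z) * W t) z :=
        (aux_hasDerivAt W hWi z).differentiableAt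
      exact (h1.div differentiableAt_id hz).add
        (h2.div (differentiableAt_pow 2) (pow_ne_zero 2 hz))
    have hΔ'diff : ∀ z : ℂ, z ≠ 0 → DifferentiableAt ℂ Δ' z := by
      intro z hz
      have hfun : Δ' = fun z : ℂ => Complex.sin ((Real.pi:ℂ) * z) / z +
          (∫ t in (0:ℝ)..Real.pi, Complex.cos (t * z) * W' t) / z ^ 2 := funext hΔ'
      rw [hfun]
      have h1 : DifferentiableAt ℂ (fun z : ℂ => Complex.sin ((Real.pi:ℂ) * z)) z :=
        (Complex.differentiable_sin.comp (differentiable_id.const_mul ((Real.pi:ℂ)))) z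
      have h2 : DifferentiableAt ℂ
          (fun z : ℂ => ∫ t in (0:ℝ)..Real.pi, Complex.cos (t * z) * W' t) z :=
        (aux_hasDerivAt W' hWi' z).differentiableAt
      exact (h1.div differentiableAt_id hz).add
        (h2.div (differentiableAt_pow 2) (pow_ne_zero 2 hz))
    -- Schwarz for Δ
    have hρball : ∀ z : ℂ, z ∈ ball (ρ n) (8*r) → ‖z - (n:ℂ)‖ ≤ 9*r := by
      intro z hz
      have h1 : ‖z - ρ n‖ < 8*r := mem_ball_iff_norm.1 hz
      calc ‖z - (n:ℂ)‖ ≤ ‖z - ρ n‖ + ‖ρ n - (n:ℂ)‖ := by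
            simpa using norm_add_le (z - ρ n) (ρ n - (n:ℂ))
        _ ≤ 8*r + r := add_le_add h1.le hρn
        _ = 9*r := by ring
    have hdΔ : DifferentiableOn ℂ Δ (ball (ρ n) (8*r)) := fun z hz =>
      (hΔdiff z (hgeom z (hρball z hz)).2.1).differentiableWithinAt
    have hmaps : MapsTo Δ (ball (ρ n) (8*r)) (ball (Δ (ρ n)) (2*C₂/n)) := by
      intro z hz
      rw [mem_ball, hzero n hn1, dist_zero_right]
      refine lt_of_le_of_lt (hΔb z (hρball z hz)) ?_
      have h2 := mul_lt_mul_of_pos_right (show C₂ < 2*C₂ by linarith) hn0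
      rw [div_lt_div_iff₀ hn0 hn0]
      linarith
    have hratio : 2*C₂/(n:ℝ)/(8*r) = C₃/n := by
      rw [hC₃def]
      field_simp
      ring
    have hdsl : ∀ z ∈ ball (ρ n) (8*r), ‖dslope Δ (ρ n) z‖ ≤ C₃/n := by
      intro z hz
      have h := Complex.norm_dslope_le_div_of_mapsTo_ball hdΔ (hmaps.mono_right ball_subset_closedBall) hz
      rwa [hratio] at h
    have hquot : ∀ z ∈ ball (ρ n) (8*r), ‖Δ z / (z - ρ n)‖ ≤ C₃ / n := by
      intro z hz
      by_cases hez : z = ρ n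
      · rw [hez, sub_self, div_zero, norm_zero]
        positivity
      · have h := hdsl z hz
        rwa [dslope_of_ne Δ hez, slope_def_field, hzero n hn1, sub_zero] at h
    -- balls relations
    have hball2 : ∀ z : ℂ, ‖z - ρ' n‖ ≤ 2*r →
        (z ∈ ball (ρ n) (8*r) ∧ ‖z - (n:ℂ)‖ ≤ 9*r) := by
      intro z hz
      have h1 : ‖z - ρ n‖ ≤ 2*r + 2*r := by
        calc ‖z - ρ n‖ ≤ ‖z - ρ' n‖ + ‖ρ' n - ρ n‖ := by
              simpa using norm_add_le (z - ρ' n) (ρ' n - ρ n)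
          _ ≤ 2*r + 2*r := add_le_add hz (by rw [norm_sub_rev]; exact hδ2r)
      constructor
      · rw [mem_ball_iff_norm]
        linarith
      · calc ‖z - (n:ℂ)‖ ≤ ‖z - ρ' n‖ + ‖ρ' n - (n:ℂ)‖ := by
              simpa using norm_add_le (z - ρ' n) (ρ' n - (n:ℂ))
          _ ≤ 2*r + r := add_le_add hz hρ'n
          _ ≤ 9*r := by linarith
    -- Part 2 bound
    have hpart2 : ∀ z : ℂ, ‖z - ρ' n‖ ≤ 2*r →
        ‖(Δ z - Δ' z) + (ρ n - ρ' n) * (Δ z / (z - ρ n))‖ ≤ S * Ξ / (n:ℝ)^2 := by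
      intro z hz
      obtain ⟨hzb, hz9⟩ := hball2 z hz
      calc ‖(Δ z - Δ' z) + (ρ n - ρ' n) * (Δ z / (z - ρ n))‖
          ≤ ‖Δ z - Δ' z‖ + ‖ρ n - ρ' n‖ * ‖Δ z / (z - ρ n)‖ := by
            refine (norm_add_le _ _).trans ?_
            rw [norm_mul]
        _ ≤ C₁ * Ξ / (n:ℝ)^2 + (Ξ/n) * (C₃/n) :=
            add_le_add (hΔhatb z hz9)
              (mul_le_mul hδn (hquot z hzb) (norm_nonneg _) (by positivity))
        _ = S * Ξ / (n:ℝ)^2 := by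
            rw [hSdef]
            field_simp
    -- G and Schwarz for G
    have hρ'ball : ∀ z : ℂ, z ∈ ball (ρ' n) (6*r) →
        (z ∈ ball (ρ n) (8*r) ∧ ‖z - (n:ℂ)‖ ≤ 9*r) := by
      intro z hz
      have h1 : ‖z - ρ' n‖ < 6*r := mem_ball_iff_norm.1 hz
      constructor
      · rw [mem_ball_iff_norm]
        calc ‖z - ρ n‖ ≤ ‖z - ρ' n‖ + ‖ρ' n - ρ n‖ := by
              simpa using norm_add_le (z - ρ' n) (ρ' n - ρ n)
          _ < 6*r + 2*r := by
              have := (norm_sub_rev (ρ' n) (ρ n)) ▸ hδ2r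
              have h2 : ‖ρ' n - ρ n‖ ≤ 2*r := by rw [norm_sub_rev]; exact hδ2r
              linarith
          _ = 8*r := by ring
      · calc ‖z - (n:ℂ)‖ ≤ ‖z - ρ' n‖ + ‖ρ' n - (n:ℂ)‖ := by
              simpa using norm_add_le (z - ρ' n) (ρ' n - (n:ℂ))
          _ ≤ 6*r + r := add_le_add h1.le hρ'n
          _ ≤ 9*r := by linarith
    have hρmem : ρ n ∈ ball (ρ' n) (6*r) := by
      rw [mem_ball_iff_norm]
      calc ‖ρ n - ρ' n‖ ≤ 2*r := hδ2r
        _ < 6*r := by linarith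
    set G : ℂ → ℂ := fun z => (Δ z - Δ' z) + (ρ n - ρ' n) * dslope Δ (ρ n) z with hGdef
    have hGd : DifferentiableOn ℂ G (ball (ρ' n) (6*r)) := by
      intro z hz
      obtain ⟨hzb, hz9⟩ := hρ'ball z hz
      have hz0 := (hgeom z hz9).2.1
      have h1 : DifferentiableWithinAt ℂ (fun z => Δ z - Δ' z) (ball (ρ' n) (6*r)) z :=
        ((hΔdiff z hz0).sub (hΔ'diff z hz0)).differentiableWithinAt
      have h2 : DifferentiableOn ℂ (dslope Δ (ρ n)) (ball (ρ' n) (6*r)) := by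
        refine (Complex.differentiableOn_dslope (isOpen_ball.mem_nhds hρmem)).2 ?_
        intro w hw
        exact (hΔdiff w (hgeom w (hρ'ball w hw).2).2.1).differentiableWithinAt
      exact h1.add ((h2 z hz).const_mul _)
    have hGb : ∀ z ∈ ball (ρ' n) (6*r), ‖G z‖ ≤ S * Ξ / (n:ℝ)^2 := by
      intro z hz
      obtain ⟨hzb, hz9⟩ := hρ'ball z hz
      calc ‖G z‖ ≤ ‖Δ z - Δ' z‖ + ‖ρ n - ρ' n‖ * ‖dslope Δ (ρ n) z‖ := by
            refine (norm_add_le _ _).trans ?_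
            rw [norm_mul]
        _ ≤ C₁ * Ξ / (n:ℝ)^2 + (Ξ/n) * (C₃/n) :=
            add_le_add (hΔhatb z hz9)
              (mul_le_mul hδn (hdsl z hzb) (norm_nonneg _) (by positivity))
        _ = S * Ξ / (n:ℝ)^2 := by
            rw [hSdef]
            field_simp
    have hG0 : G (ρ' n) = 0 := by
      rw [hGdef]
      simp only []
      by_cases h : ρ' n = ρ n
      · rw [hzero' n hn1, h, hzero n hn1]
        simp
      · rw [dslope_of_ne Δ h, slope_def_field, hzero n hn1, hzero' n hn1, sub_zero]
        have hne : ρ' n - ρ n ≠ 0 := sub_ne_zero.2 h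
        field_simp
        ring
    have hMpos : 0 < S * Ξ / (n:ℝ)^2 := by positivity
    have hGmaps : MapsTo G (ball (ρ' n) (6*r)) (ball (G (ρ' n)) (2*(S * Ξ / (n:ℝ)^2))) := by
      intro z hz
      rw [mem_ball, hG0, dist_zero_right]
      exact lt_of_le_of_lt (hGb z hz) (by linarith)
    have hGdsl : ∀ z ∈ ball (ρ' n) (6*r),
        ‖dslope G (ρ' n) z‖ ≤ 2*(S * Ξ / (n:ℝ)^2)/(6*r) :=
      fun z hz => Complex.norm_dslope_le_div_of_mapsTo_ball hGd (hGmaps.mono_right ball_subset_closedBall) hz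
    -- conclusion
    constructor
    · intro z hz
      refine (hpart2 z hz).trans ?_
      have hd0 : 0 ≤ S / (3*r) := by positivity
      have hS' : S ≤ C' := by rw [hC'def]; linarith
      gcongr
    · intro L hL
      have hmemn : (n:ℂ) ∈ ball (ρ' n) (6*r) := by
        rw [mem_ball_iff_norm]
        calc ‖(n:ℂ) - ρ' n‖ = ‖ρ' n - (n:ℂ)‖ := norm_sub_rev _ _
          _ ≤ r := hρ'n
          _ < 6*r := by linarith
      have ev1 : ∀ᶠ z in 𝓝[≠] ((n:ℂ)), z ∈ ball (ρ' n) (6*r) :=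
        (isOpen_ball.eventually_mem hmemn).filter_mono nhdsWithin_le_nhds
      have ev2 : ∀ᶠ z in 𝓝[≠] ((n:ℂ)), z ≠ ρ n := by
        by_cases hc : ρ n = (n:ℂ)
        · rw [hc]
          exact eventually_mem_nhdsWithin.mono fun z hz => hz
        · exact (eventually_ne_nhds fun h => hc h.symm).filter_mono nhdsWithin_le_nhds
      have ev3 : ∀ᶠ z in 𝓝[≠] ((n:ℂ)), z ≠ ρ' n := by
        by_cases hc : ρ' n = (n:ℂ)
        · rw [hc]
          exact eventually_mem_nhdsWithin.mono fun z hz => hz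
        · exact (eventually_ne_nhds fun h => hc h.symm).filter_mono nhdsWithin_le_nhds
      have hev : ∀ᶠ z in 𝓝[≠] ((n:ℂ)),
          ‖((Δ z - Δ' z) + (ρ n - ρ' n) * (Δ z / (z - ρ n))) / (z - ρ' n)‖
            ≤ 2*(S * Ξ / (n:ℝ)^2)/(6*r) := by
        filter_upwards [ev1, ev2, ev3] with z hz1 hz2 hz3
        have e1 : Δ z / (z - ρ n) = dslope Δ (ρ n) z := by
          rw [dslope_of_ne Δ hz2, slope_def_field, hzero n hn1, sub_zero]
        have e2 : ((Δ z - Δ' z) + (ρ n - ρ' n) * (Δ z / (z - ρ n))) / (z - ρ' n)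
            = dslope G (ρ' n) z := by
          rw [dslope_of_ne G hz3, slope_def_field, hG0, sub_zero, e1]
        rw [e2]
        exact hGdsl z hz1
      have hLle : ‖L‖ ≤ 2*(S * Ξ / (n:ℝ)^2)/(6*r) := le_of_tendsto hL.norm hev
      refine hLle.trans ?_
      have e3 : 2*(S * Ξ / (n:ℝ)^2)/(6*r) = (S/(3*r)) * (Ξ/(n:ℝ)^2) := by
        field_simp
        ring
      have e4 : C' * Ξ / (n:ℝ)^2 = C' * (Ξ/(n:ℝ)^2) := by ring
      rw [e3, e4]
      have hd0 : 0 ≤ S / (3*r) := by positivity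
      have h5 : S/(3*r) ≤ C' := by rw [hC'def]; linarith
      exact mul_le_mul_of_nonneg_right h5 (by positivity)
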